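/- The labeling φ on D(n,l) (with n-l+1 ≥ ⌈n/2⌉, case Δ > ⌈(|E|+1)/2⌉) defined by φ(x_i)=i for 1 ≤ i ≤ n-l, φ(p_0)=1, φ(p_1)=n-l+1, and suitable labels φ(p_j) ≤ n-l+1 for j ≥ 2, gives pairwise distinct edge weights: the star edges p_0x_i get weights i+1 ∈ {2,...,n-l+1}, and the path edges get distinct weights in {n-l+2,...,2n-2l+2}. -/
import Mathlib


/-- A vertex `k`-labeling `φ : V → {1,…,k}` of `G` is *edge irregular* if the
weights `φ x + φ y` of distinct edges are distinct. -/
def IsEdgeIrregular {V : Type*} (G : SimpleGraph V) (k : ℕ) (φ : V → ℕ) : Prop :=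
  (∀ v, 1 ≤ φ v ∧ φ v ≤ k) ∧
  ∀ u v x y, G.Adj u v → G.Adj x y → s(u, v) ≠ s(x, y) → φ u + φ v ≠ φ x + φ y

/-- The edge irregularity strength `es G`. -/
noncomputable def es {V : Type*} (G : SimpleGraph V) : ℕ :=
  sInf {k | ∃ φ : V → ℕ, IsEdgeIrregular G k φ}

/-- The Dandelion graph `D(n,l)` on `Fin n`: path vertices `p_j` are `0,…,l-1`,
leaves `x_1,…,x_{n-l}` are `l,…,n-1`, each leaf adjacent to the center `0`. -/
def Dandelion (n l : ℕ) : SimpleGraph (Fin n) :=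
  SimpleGraph.fromRel (fun a b =>
    (a.val = 0 ∧ l ≤ b.val) ∨ (a.val + 1 = b.val ∧ b.val ≤ l - 1))

instance (n l : ℕ) : DecidableRel (Dandelion n l).Adj := fun a b =>
  decidable_of_iff _ (SimpleGraph.fromRel_adj _ a b).symm

/-- In the case `Δ(D(n,l)) > ⌈(|E|+1)/2⌉`, there is an edge irregular
`(n-l+1)`-labeling `φ` with `φ(x_i) = i`, `φ(p_0) = 1`, `φ(p_1) = n-l+1`, and
`φ(p_j) ≤ n-l+1` for `2 ≤ j ≤ l-1`; the star edges `p_0 x_i` get the weights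
`i+1 ∈ {2,…,n-l+1}`, and the path edges get (pairwise distinct) weights in
`{n-l+2,…,2n-2l+2}`.  (Here `p_j` is vertex `j` and `x_i` is vertex `l+i-1`.) -/
def psiD (n l j : ℕ) : ℕ :=
  if l ≤ j then j - l + 1 else if j = 0 then 1 else (n - l + 1) - (j - 1) / 2

lemma psiD_star {n l j : ℕ} (h : l ≤ j) : psiD n l j = j - l + 1 := by
  simp [psiD, h]

lemma psiD_zero {n l : ℕ} (hl : 2 ≤ l) : psiD n l 0 = 1 := by
  have h0 : ¬ l ≤ 0 := by omega
  simp [psiD, h0]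

lemma psiD_path {n l j : ℕ} (h1 : 1 ≤ j) (h2 : j < l) :
    psiD n l j = (n - l + 1) - (j - 1) / 2 := by
  have : ¬ l ≤ j := by omega
  have : j ≠ 0 := by omega
  simp [psiD, *]

/-- Weight of an ordered edge `(a,b)`. -/
lemma psiD_weight {n l a b : ℕ} (hl : 2 ≤ l) (hml : l + 1 ≤ n - l + 1) (hb : b < n)
    (hrel : (a = 0 ∧ l ≤ b) ∨ (a + 1 = b ∧ b ≤ l - 1)) :
    (l ≤ b ∧ psiD n l a + psiD n l b = b - l + 2 ∧ b - l + 2 ≤ n - l + 1) ∨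
    (a = 0 ∧ b = 1 ∧ psiD n l a + psiD n l b = (n - l + 1) + 1) ∨
    (1 ≤ a ∧ a + 1 = b ∧ b ≤ l - 1 ∧
      psiD n l a + psiD n l b = 2 * (n - l + 1) - (a - 1) ∧
      (n - l + 1) + 4 ≤ psiD n l a + psiD n l b ∧
      psiD n l a + psiD n l b ≤ 2 * (n - l + 1)) := by
  rcases hrel with ⟨ha, hb'⟩ | ⟨hab, hbl⟩
  · left
    subst ha
    rw [psiD_zero hl, psiD_star hb']
    omega
  · rcases Nat.eq_zero_or_pos a with ha | ha
    · right; left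
      subst ha
      rw [psiD_zero hl, psiD_path (by omega) (by omega)]
      refine ⟨rfl, by omega, ?_⟩
      have : (b - 1) / 2 = 0 := by omega
      omega
    · right; right
      rw [psiD_path (j := a) ha (by omega), psiD_path (j := b) (by omega) (by omega)]
      have h2 : (a - 1) / 2 + (b - 1) / 2 = a - 1 := by omega
      have h3 : (a - 1) / 2 ≤ (a - 1) := by omega
      have h4 : a - 1 ≤ l - 3 := by omega
      refine ⟨ha, hab, hbl, by omega, by omega, by omega⟩

lemma psiD_inj {n l a b c d : ℕ} (hl : 2 ≤ l) (hml : l + 1 ≤ n - l + 1)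
    (hb : b < n) (hd : d < n)
    (h1 : (a = 0 ∧ l ≤ b) ∨ (a + 1 = b ∧ b ≤ l - 1))
    (h2 : (c = 0 ∧ l ≤ d) ∨ (c + 1 = d ∧ d ≤ l - 1))
    (hsum : psiD n l a + psiD n l b = psiD n l c + psiD n l d) :
    a = c ∧ b = d := by
  have w1 := psiD_weight hl hml hb h1
  have w2 := psiD_weight hl hml hd h2
  have e1 : a = 0 ∨ a + 1 = b := by omega
  have e2 : c = 0 ∨ c + 1 = d := by omega
  rcases w1 with ⟨u1, u2, u3⟩ | ⟨u1, u2, u3⟩ | ⟨u1, u2, u3, u4, u5, u6⟩ <;>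
    rcases w2 with ⟨v1, v2, v3⟩ | ⟨v1, v2, v3⟩ | ⟨v1, v2, v3, v4, v5, v6⟩ <;>
    omega

theorem stmt_14 (n l : ℕ) (hl : 2 ≤ l) (hn : l < n) (h : n - l + 1 > (n + 1) / 2) :
    ∃ φ : Fin n → ℕ,
      (∀ v : Fin n, l ≤ v.val → φ v = v.val - l + 1) ∧
      (∀ v : Fin n, v.val = 0 → φ v = 1) ∧
      (∀ v : Fin n, v.val = 1 → φ v = n - l + 1) ∧
      (∀ v : Fin n, 2 ≤ v.val → v.val ≤ l - 1 → φ v ≤ n - l + 1) ∧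
      IsEdgeIrregular (Dandelion n l) (n - l + 1) φ ∧
      (∀ u v : Fin n, u.val < l → v.val < l → (Dandelion n l).Adj u v →
        n - l + 2 ≤ φ u + φ v ∧ φ u + φ v ≤ 2 * n - 2 * l + 2) := by
  have hml : l + 1 ≤ n - l + 1 := by omega
  have hadj : ∀ u v : Fin n, (Dandelion n l).Adj u v ↔ u ≠ v ∧
      (((u.val = 0 ∧ l ≤ v.val) ∨ (u.val + 1 = v.val ∧ v.val ≤ l - 1)) ∨
       ((v.val = 0 ∧ l ≤ u.val) ∨ (v.val + 1 = u.val ∧ u.val ≤ l - 1))) := by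
    intro u v
    rw [Dandelion, SimpleGraph.fromRel_adj]
  refine ⟨fun v => psiD n l v.val, ?_, ?_, ?_, ?_, ⟨?_, ?_⟩, ?_⟩
  · intro v hv
    exact psiD_star hv
  · intro v hv
    show psiD n l v.val = 1
    rw [hv]
    exact psiD_zero hl
  · intro v hv
    show psiD n l v.val = n - l + 1
    rw [hv, psiD_path (by omega) (by omega)]
    omega
  · intro v h2 h3
    show psiD n l v.val ≤ n - l + 1
    rw [psiD_path (by omega) (by omega)]
    omega
  · intro v
    show 1 ≤ psiD n l v.val ∧ psiD n l v.val ≤ n - l + 1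
    have hv := v.isLt
    by_cases hle : l ≤ v.val
    · rw [psiD_star hle]; omega
    · rcases Nat.eq_zero_or_pos v.val with h0 | h0
      · rw [h0, psiD_zero hl]; omega
      · rw [psiD_path h0 (by omega)]
        have : (v.val - 1) / 2 ≤ v.val - 1 := Nat.div_le_self _ _
        omega
  · intro u v x y h1 h2 hne hsum
    apply hne
    rw [hadj] at h1 h2
    obtain ⟨-, hu⟩ := h1
    obtain ⟨-, hx⟩ := h2
    have hvlt := v.isLt; have hult := u.isLt
    have hxlt := x.isLt; have hylt := y.isLt
    rw [Sym2.eq_iff]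
    simp only [Fin.ext_iff]
    change psiD n l u.val + psiD n l v.val = psiD n l x.val + psiD n l y.val at hsum
    rcases hu with hu | hu <;> rcases hx with hx | hx
    · have := psiD_inj hl hml hvlt hylt hu hx hsum
      tauto
    · have := psiD_inj hl hml hvlt hxlt hu hx (by omega)
      tauto
    · have := psiD_inj hl hml hult hylt hu hx (by omega)
      tauto
    · have := psiD_inj hl hml hult hxlt hu hx (by omega)
      tauto
  · intro u v hu hv hA
    rw [hadj] at hA
    obtain ⟨-, hA⟩ := hA
    show n - l + 2 ≤ psiD n l u.val + psiD n l v.val ∧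
      psiD n l u.val + psiD n l v.val ≤ 2 * n - 2 * l + 2
    rcases hA with hA | hA
    · have := psiD_weight hl hml v.isLt hA
      omega
    · have := psiD_weight hl hml u.isLt hA
      omega
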